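/- Let H = (V,H) be a boolean representable simplicial complex, τ ⊆ η an equivalence relation with projection φ, and H/τ the quotient complex. For X ⊆ V: X is a facet of H if and only if φ restricted to X is injective and Xφ is a facet of H/τ. -/

import Mathlib

open scoped Classical

variable {V : Type}

def IsSC (faces : Set (Finset V)) : Prop :=
  (∀ v : V, ({v} : Finset V) ∈ faces) ∧
    ∀ ⦃X Y : Finset V⦄, X ∈ faces → Y ⊆ X → Y ∈ faces

def IsFlat (faces : Set (Finset V)) (F : Set V) : Prop :=
  ∀ I ∈ faces, (I : Set V) ⊆ F → ∀ p ∉ F, insert p I ∈ faces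

def cl (faces : Set (Finset V)) (X : Set V) : Set V :=
  ⋂₀ {F : Set V | IsFlat faces F ∧ X ⊆ F}

def BRep (faces : Set (Finset V)) : Prop :=
  ∀ X ∈ faces, ∃ (k : ℕ) (F : Fin (k + 1) → Set V) (x : Fin k → V),
    (∀ i, IsFlat faces (F i)) ∧ StrictMono F ∧ Function.Injective x ∧
    (∀ i : Fin k, x i ∈ F i.succ \ F i.castSucc) ∧
    X = Finset.image x Finset.univ

def skel (faces : Set (Finset V)) : SimpleGraph V where
  Adj p q := p ≠ q ∧ ({p, q} : Finset V) ∈ faces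
  symm := by
    constructor
    rintro p q ⟨h1, h2⟩
    exact ⟨h1.symm, by rwa [Finset.pair_comm]⟩
  loopless := by constructor; rintro p ⟨h, _⟩; exact h rfl

def flatGraph (faces : Set (Finset V)) : SimpleGraph V where
  Adj p q := p ≠ q ∧ cl faces {p, q} ≠ Set.univ
  symm := by
    constructor
    rintro p q ⟨h1, h2⟩
    exact ⟨h1.symm, by rwa [Set.pair_comm]⟩
  loopless := by constructor; rintro p ⟨h, _⟩; exact h rfl

def quotFaces (faces : Set (Finset V)) (τ : Setoid V) :
    Set (Finset (Quotient τ)) :=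
  {Y | ∃ X ∈ faces, Y = X.image (Quotient.mk τ)}
def IsFacet {W : Type} (faces : Set (Finset W)) (X : Finset W) : Prop :=
  X ∈ faces ∧ ∀ Y ∈ faces, X ⊆ Y → X = Y

lemma subset_cl (faces : Set (Finset V)) (X : Set V) : X ⊆ cl faces X := by
  intro a ha F hF
  exact hF.2 ha

lemma cl_subset (faces : Set (Finset V)) {X F : Set V} (hF : IsFlat faces F)
    (hXF : X ⊆ F) : cl faces X ⊆ F :=
  Set.sInter_subset_of_mem ⟨hF, hXF⟩

lemma mem_flat_iff {faces : Set (Finset V)} {F : Set V} (hF : IsFlat faces F)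
    (a : V) : a ∈ F ↔ cl faces {a} ⊆ F := by
  constructor
  · intro ha
    exact cl_subset faces hF (by simpa using ha)
  · intro h
    exact h (subset_cl faces {a} rfl)

lemma mem_flat_congr {faces : Set (Finset V)} {F : Set V} (hF : IsFlat faces F)
    {a b : V} (h : cl faces {a} = cl faces {b}) : a ∈ F ↔ b ∈ F := by
  rw [mem_flat_iff hF, mem_flat_iff hF, h]

lemma empty_mem_faces [Nonempty V] {faces : Set (Finset V)} (hsc : IsSC faces) :
    (∅ : Finset V) ∈ faces := by
  obtain ⟨v⟩ := ‹Nonempty V›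
  exact hsc.2 (hsc.1 v) (Finset.empty_subset _)

lemma transversal_mem [Nonempty V] {faces : Set (Finset V)} (hsc : IsSC faces) :
    ∀ (k : ℕ) (F : Fin (k + 1) → Set V) (x : Fin k → V),
      (∀ i, IsFlat faces (F i)) → Monotone F →
      (∀ i : Fin k, x i ∈ F i.succ \ F i.castSucc) →
      Finset.image x Finset.univ ∈ faces := by
  intro k
  induction k with
  | zero =>
    intro F x _ _ _
    simpa using empty_mem_faces hsc
  | succ k ih =>
    intro F x hflat hmono hx
    have hI : Finset.image (x ∘ Fin.castSucc) Finset.univ ∈ faces := by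
      apply ih (F ∘ Fin.castSucc) (x ∘ Fin.castSucc) (fun i => hflat _)
        (fun i j hij => hmono (by simpa using hij))
      intro i
      have h := hx i.castSucc
      have heq : (Fin.castSucc i).succ = Fin.castSucc i.succ := by
        ext; simp
      constructor
      · show x i.castSucc ∈ F i.succ.castSucc
        rw [← heq]
        exact h.1
      · exact h.2
    have hset : Finset.image x Finset.univ =
        insert (x (Fin.last k)) (Finset.image (x ∘ Fin.castSucc) Finset.univ) := by
      ext a
      simp only [Finset.mem_image, Finset.mem_insert, Finset.mem_univ, true_and,
        Function.comp]
      constructor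
      · rintro ⟨i, rfl⟩
        rcases Fin.eq_castSucc_or_eq_last i with ⟨j, rfl⟩ | rfl
        · exact Or.inr ⟨j, rfl⟩
        · exact Or.inl rfl
      · rintro (rfl | ⟨j, rfl⟩)
        · exact ⟨_, rfl⟩
        · exact ⟨_, rfl⟩
    have hsub : ↑(Finset.image (x ∘ Fin.castSucc) Finset.univ)
        ⊆ F (Fin.last k).castSucc := by
      intro a ha
      simp only [Finset.coe_image, Set.mem_image, Finset.mem_coe, Finset.mem_univ,
        Finset.coe_univ, Set.mem_univ, true_and, Function.comp] at ha
      obtain ⟨j, -, rfl⟩ := ha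
      refine hmono ?_ (hx j.castSucc).1
      rw [Fin.le_def]
      simp
    have hp : x (Fin.last k) ∉ F (Fin.last k).castSucc := (hx (Fin.last k)).2
    rw [hset]
    exact hflat _ _ hI hsub _ hp

lemma image_mem_faces [Nonempty V] {faces : Set (Finset V)} (hsc : IsSC faces)
    (hbr : BRep faces) {X : Finset V} (hX : X ∈ faces) (g : V → V)
    (hg : ∀ v ∈ X, cl faces {g v} = cl faces {v}) : X.image g ∈ faces := by
  obtain ⟨k, F, x, hflat, hmono, hinj, hx, hXeq⟩ := hbr X hX
  have key : Finset.image (g ∘ x) Finset.univ ∈ faces := by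
    apply transversal_mem hsc k F (g ∘ x) hflat hmono.monotone
    intro i
    have hxi : x i ∈ X := by
      rw [hXeq]; exact Finset.mem_image_of_mem _ (Finset.mem_univ _)
    constructor
    · exact (mem_flat_congr (hflat i.succ) (hg _ hxi)).2 (hx i).1
    · intro hmem
      exact (hx i).2 ((mem_flat_congr (hflat i.castSucc) (hg _ hxi)).1 hmem)
  rw [hXeq, Finset.image_image]
  exact key

lemma eq_of_cl_eq_of_mem_face {faces : Set (Finset V)} (hsc : IsSC faces)
    (hbr : BRep faces) {X : Finset V} (hX : X ∈ faces)
    {a b : V} (ha : a ∈ X) (hb : b ∈ X)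
    (hcl : cl faces {a} = cl faces {b}) : a = b := by
  by_contra hne
  have hpair : ({a, b} : Finset V) ∈ faces := by
    refine hsc.2 hX ?_
    intro v hv
    rcases Finset.mem_insert.1 hv with rfl | hv
    · exact ha
    · rcases Finset.mem_singleton.1 hv with rfl
      exact hb
  obtain ⟨k, F, x, hflat, hmono, hinj, hx, himg⟩ := hbr _ hpair
  have haim : a ∈ Finset.image x Finset.univ := by
    rw [← himg]; simp
  have hbim : b ∈ Finset.image x Finset.univ := by
    rw [← himg]; simp
  obtain ⟨i, -, hia⟩ := Finset.mem_image.1 haim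
  obtain ⟨j, -, hjb⟩ := Finset.mem_image.1 hbim
  have hij : i ≠ j := by
    rintro rfl
    exact hne (hia ▸ hjb)
  rcases lt_or_gt_of_ne hij with h | h
  · have h1 : a ∈ F j.castSucc := by
      refine hmono.monotone ?_ (hia ▸ (hx i).1)
      rw [Fin.le_def]
      have := Fin.lt_def.1 h
      simp
      omega
    have h2 : b ∈ F j.castSucc := (mem_flat_congr (hflat _) hcl).1 h1
    exact (hx j).2 (hjb ▸ h2)
  · have h1 : b ∈ F i.castSucc := by
      refine hmono.monotone ?_ (hjb ▸ (hx j).1)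
      rw [Fin.le_def]
      have := Fin.lt_def.1 h
      simp
      omega
    have h2 : a ∈ F i.castSucc := (mem_flat_congr (hflat _) hcl).2 h1
    exact (hx i).2 (hia ▸ h2)

lemma injOn_quot_of_face {faces : Set (Finset V)} (hsc : IsSC faces)
    (hbr : BRep faces) (τ : Setoid V)
    (hτ : ∀ a b : V, τ.r a b → cl faces {a} = cl faces {b})
    {Y : Finset V} (hY : Y ∈ faces) :
    Set.InjOn (Quotient.mk τ) (Y : Set V) := by
  intro a ha b hb hab
  exact eq_of_cl_eq_of_mem_face hsc hbr hY ha hb (hτ a b (Quotient.exact hab))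

lemma exists_superface [Nonempty V] {faces : Set (Finset V)} (hsc : IsSC faces)
    (hbr : BRep faces) (τ : Setoid V)
    (hτ : ∀ a b : V, τ.r a b → cl faces {a} = cl faces {b})
    {X Z : Finset V} (hXinj : Set.InjOn (Quotient.mk τ) (X : Set V))
    (hZ : Z ∈ faces)
    (hsub : X.image (Quotient.mk τ) ⊆ Z.image (Quotient.mk τ)) :
    ∃ W ∈ faces, X ⊆ W ∧ W.image (Quotient.mk τ) = Z.image (Quotient.mk τ) := by
  classical
  set g : V → V := fun z =>
    if h : ∃ x ∈ X, Quotient.mk τ x = Quotient.mk τ z then h.choose else z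
    with hgdef
  have hgτ : ∀ z, τ.r (g z) z := by
    intro z
    by_cases h : ∃ x ∈ X, Quotient.mk τ x = Quotient.mk τ z
    · have hz : g z = h.choose := dif_pos h
      rw [hz]
      exact Quotient.exact h.choose_spec.2
    · have hz : g z = z := dif_neg h
      rw [hz]
  have hgcl : ∀ z, cl faces {g z} = cl faces {z} := fun z => hτ _ _ (hgτ z)
  refine ⟨Z.image g, image_mem_faces hsc hbr hZ g (fun v _ => hgcl v), ?_, ?_⟩
  · intro a ha
    have hmem : Quotient.mk τ a ∈ Z.image (Quotient.mk τ) :=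
      hsub (Finset.mem_image_of_mem _ ha)
    obtain ⟨z, hz, hφz⟩ := Finset.mem_image.1 hmem
    have hex : ∃ x ∈ X, Quotient.mk τ x = Quotient.mk τ z := ⟨a, ha, hφz.symm⟩
    have hgz : g z = a := by
      have h1 := hex.choose_spec
      have h2 : g z = hex.choose := dif_pos hex
      rw [h2]
      exact hXinj h1.1 ha (h1.2.trans hφz)
    rw [← hgz]
    exact Finset.mem_image_of_mem _ hz
  · rw [Finset.image_image]
    apply Finset.image_congr
    intro z _
    exact Quotient.sound (hgτ z)

theorem facet_iff_quot_facet [Fintype V] [Nonempty V]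
    {faces : Set (Finset V)} (hsc : IsSC faces) (hbr : BRep faces)
    (τ : Setoid V) (hτ : ∀ a b : V, τ.r a b → cl faces {a} = cl faces {b})
    (X : Finset V) :
    IsFacet faces X ↔
      (Set.InjOn (Quotient.mk τ) (X : Set V) ∧
        IsFacet (quotFaces faces τ) (X.image (Quotient.mk τ))) := by
  constructor
  · rintro ⟨hXf, hXmax⟩
    have hinj := injOn_quot_of_face hsc hbr τ hτ hXf
    refine ⟨hinj, ⟨⟨X, hXf, rfl⟩, ?_⟩⟩
    rintro Y' ⟨Z, hZ, rfl⟩ hsub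
    obtain ⟨W, hW, hXW, hWZ⟩ := exists_superface hsc hbr τ hτ hinj hZ hsub
    rw [← hWZ, ← hXmax W hW hXW]
  · rintro ⟨hinj, ⟨⟨Z, hZ, hZeq⟩, hmax⟩⟩
    have hXface : X ∈ faces := by
      obtain ⟨W, hW, hXW, hWZ⟩ :=
        exists_superface hsc hbr τ hτ hinj hZ (by rw [hZeq])
      have hWinj := injOn_quot_of_face hsc hbr τ hτ hW
      have hcard : W.card = X.card := by
        rw [← Finset.card_image_of_injOn hWinj, hWZ, ← hZeq,
          Finset.card_image_of_injOn hinj]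
      have hXeq : X = W := Finset.eq_of_subset_of_card_le hXW (le_of_eq hcard)
      rw [hXeq]
      exact hW
    refine ⟨hXface, ?_⟩
    intro Y hY hXY
    have hYinj := injOn_quot_of_face hsc hbr τ hτ hY
    have himg : X.image (Quotient.mk τ) = Y.image (Quotient.mk τ) :=
      hmax _ ⟨Y, hY, rfl⟩ (Finset.image_subset_image hXY)
    have hcard : Y.card ≤ X.card := by
      rw [← Finset.card_image_of_injOn hYinj, ← himg,
        Finset.card_image_of_injOn hinj]
    exact Finset.eq_of_subset_of_card_le hXY hcard
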